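/- Let t ≥ 2 and let G_{A,B} be a K_{t,t}-free bipartite graph with |A| = m and |B| = n, and let 1 ≤ k ≤ m−1 and 1 ≤ ℓ ≤ n−1 be integers. Suppose N is a family of f t-element subsets of A such that every b ∈ B with deg(b) ≥ k has some T ∈ N with T ⊆ N(b), and N* is a family of f* t-element subsets of B such that every a ∈ A with deg(a) ≥ ℓ has some T* ∈ N* with T* ⊆ N(a). Let A' = {a ∈ A : deg(a) ≥ ℓ} and B' = {b ∈ B : deg(b) ≥ k}, and let G[A',B'] denote the induced bipartite subgraph on A' and B'. Then |A'| ≤ (t−1)·f*, |B'| ≤ (t−1)·f, and |E(G)| ≤ (k−1)·n + (ℓ−1)·m + |E(G[A',B'])|. -/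

import Mathlib

open scoped Classical
open Finset

theorem stmt_3 {α β : Type*} [DecidableEq α] [DecidableEq β]
    (t m n k ℓ f fstar : ℕ) (ht : 2 ≤ t)
    (A : Finset α) (B : Finset β) (E : Finset (α × β))
    (hE : E ⊆ A ×ˢ B) (hm : A.card = m) (hn : B.card = n)
    (hk1 : 1 ≤ k) (hk2 : k ≤ m - 1) (hℓ1 : 1 ≤ ℓ) (hℓ2 : ℓ ≤ n - 1)
    (hfree : ¬ ∃ (S : Finset α) (T : Finset β), S ⊆ A ∧ T ⊆ B ∧
      S.card = t ∧ T.card = t ∧ ∀ a ∈ S, ∀ b ∈ T, (a, b) ∈ E)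
    (N : Finset (Finset α)) (hf : N.card = f)
    (hNsub : ∀ T ∈ N, T ⊆ A ∧ T.card = t)
    (hnet : ∀ b ∈ B, k ≤ (A.filter fun a => (a, b) ∈ E).card →
      ∃ T ∈ N, T ⊆ A.filter fun a => (a, b) ∈ E)
    (Nstar : Finset (Finset β)) (hfstar : Nstar.card = fstar)
    (hNstarsub : ∀ T ∈ Nstar, T ⊆ B ∧ T.card = t)
    (hnetstar : ∀ a ∈ A, ℓ ≤ (B.filter fun b => (a, b) ∈ E).card →
      ∃ T ∈ Nstar, T ⊆ B.filter fun b => (a, b) ∈ E) :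
    (A.filter fun a => ℓ ≤ (B.filter fun b => (a, b) ∈ E).card).card ≤ (t - 1) * fstar ∧
    (B.filter fun b => k ≤ (A.filter fun a => (a, b) ∈ E).card).card ≤ (t - 1) * f ∧
    E.card ≤ (k - 1) * n + (ℓ - 1) * m +
      (E.filter fun p =>
        p.1 ∈ (A.filter fun a => ℓ ≤ (B.filter fun b => (a, b) ∈ E).card) ∧
        p.2 ∈ (B.filter fun b => k ≤ (A.filter fun a => (a, b) ∈ E).card)).card := by
  classical
  set A' := A.filter fun a => ℓ ≤ (B.filter fun b => (a, b) ∈ E).card with hA'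
  set B' := B.filter fun b => k ≤ (A.filter fun a => (a, b) ∈ E).card with hB'
  have part1 : A'.card ≤ (t - 1) * fstar := by
    have hsub : A' ⊆ Nstar.biUnion
        (fun T => A'.filter fun a => T ⊆ B.filter fun b => (a, b) ∈ E) := by
      intro a ha
      obtain ⟨haA, hdeg⟩ := mem_filter.mp ha
      obtain ⟨T, hT, hTsub⟩ := hnetstar a haA hdeg
      exact mem_biUnion.mpr ⟨T, hT, mem_filter.mpr ⟨ha, hTsub⟩⟩
    have hfiber : ∀ T ∈ Nstar,
        (A'.filter fun a => T ⊆ B.filter fun b => (a, b) ∈ E).card ≤ t - 1 := by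
      intro T hT
      by_contra hlt
      push_neg at hlt
      have ht' : t ≤ (A'.filter fun a => T ⊆ B.filter fun b => (a, b) ∈ E).card := by omega
      obtain ⟨S, hSsub, hScard⟩ := exists_subset_card_eq ht'
      refine hfree ⟨S, T, ?_, (hNstarsub T hT).1, hScard, (hNstarsub T hT).2, ?_⟩
      · intro a ha
        exact mem_of_mem_filter a (mem_filter.mp (hSsub ha)).1
      · intro a ha b hb
        exact (mem_filter.mp ((mem_filter.mp (hSsub ha)).2 hb)).2
    calc A'.card ≤ (Nstar.biUnion
          (fun T => A'.filter fun a => T ⊆ B.filter fun b => (a, b) ∈ E)).card :=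
        card_le_card hsub
      _ ≤ ∑ T ∈ Nstar, (A'.filter fun a => T ⊆ B.filter fun b => (a, b) ∈ E).card :=
        card_biUnion_le
      _ ≤ ∑ _T ∈ Nstar, (t - 1) := sum_le_sum hfiber
      _ = (t - 1) * fstar := by rw [sum_const, smul_eq_mul, hfstar, mul_comm]
  have part2 : B'.card ≤ (t - 1) * f := by
    have hsub : B' ⊆ N.biUnion
        (fun T => B'.filter fun b => T ⊆ A.filter fun a => (a, b) ∈ E) := by
      intro b hb
      obtain ⟨hbB, hdeg⟩ := mem_filter.mp hb
      obtain ⟨T, hT, hTsub⟩ := hnet b hbB hdeg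
      exact mem_biUnion.mpr ⟨T, hT, mem_filter.mpr ⟨hb, hTsub⟩⟩
    have hfiber : ∀ T ∈ N,
        (B'.filter fun b => T ⊆ A.filter fun a => (a, b) ∈ E).card ≤ t - 1 := by
      intro T hT
      by_contra hlt
      push_neg at hlt
      have ht' : t ≤ (B'.filter fun b => T ⊆ A.filter fun a => (a, b) ∈ E).card := by omega
      obtain ⟨S, hSsub, hScard⟩ := exists_subset_card_eq ht'
      refine hfree ⟨T, S, (hNsub T hT).1, ?_, (hNsub T hT).2, hScard, ?_⟩
      · intro b hb
        exact mem_of_mem_filter b (mem_filter.mp (hSsub hb)).1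
      · intro a ha b hb
        exact (mem_filter.mp ((mem_filter.mp (hSsub hb)).2 ha)).2
    calc B'.card ≤ (N.biUnion
          (fun T => B'.filter fun b => T ⊆ A.filter fun a => (a, b) ∈ E)).card :=
        card_le_card hsub
      _ ≤ ∑ T ∈ N, (B'.filter fun b => T ⊆ A.filter fun a => (a, b) ∈ E).card :=
        card_biUnion_le
      _ ≤ ∑ _T ∈ N, (t - 1) := sum_le_sum hfiber
      _ = (t - 1) * f := by rw [sum_const, smul_eq_mul, hf, mul_comm]
  refine ⟨part1, part2, ?_⟩
  have hE1 : (E.filter fun p => p.2 ∉ B').card ≤ (k - 1) * n := by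
    calc (E.filter fun p => p.2 ∉ B').card
        = ∑ b ∈ B, ((E.filter fun p => p.2 ∉ B').filter fun p => p.2 = b).card :=
        card_eq_sum_card_fiberwise (fun p hp =>
          (mem_product.mp (hE (mem_filter.mp hp).1)).2)
      _ ≤ ∑ _b ∈ B, (k - 1) := ?_
      _ = (k - 1) * n := by rw [sum_const, smul_eq_mul, hn, mul_comm]
    refine sum_le_sum (fun b hb => ?_)
    by_cases hbB' : b ∈ B'
    · have : ((E.filter fun p => p.2 ∉ B').filter fun p => p.2 = b) = ∅ := by
        refine eq_empty_of_forall_notMem (fun p hp => ?_)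
        obtain ⟨hp1, hp2⟩ := mem_filter.mp hp
        exact (mem_filter.mp hp1).2 (hp2 ▸ hbB')
      rw [this]; simp
    · have hdeg : (A.filter fun a => (a, b) ∈ E).card ≤ k - 1 := by
        have : ¬ k ≤ (A.filter fun a => (a, b) ∈ E).card := by
          intro h
          exact hbB' (mem_filter.mpr ⟨hb, h⟩)
        omega
      refine le_trans ?_ hdeg
      refine card_le_card_of_injOn Prod.fst (fun p hp => ?_) (fun p hp q hq hpq => ?_)
      · obtain ⟨hp1, hp2⟩ := mem_filter.mp hp
        have hpE := (mem_filter.mp hp1).1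
        refine mem_filter.mpr ⟨(mem_product.mp (hE hpE)).1, ?_⟩
        have : p = (p.1, b) := by
          rw [← hp2]
        rw [← this]; exact hpE
      · have hp2 := (mem_filter.mp hp).2
        have hq2 := (mem_filter.mp hq).2
        exact Prod.ext hpq (hp2.trans hq2.symm)
  have hE2 : (E.filter fun p => p.2 ∈ B' ∧ p.1 ∉ A').card ≤ (ℓ - 1) * m := by
    calc (E.filter fun p => p.2 ∈ B' ∧ p.1 ∉ A').card
        = ∑ a ∈ A, ((E.filter fun p => p.2 ∈ B' ∧ p.1 ∉ A').filter fun p => p.1 = a).card :=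
        card_eq_sum_card_fiberwise (fun p hp =>
          (mem_product.mp (hE (mem_filter.mp hp).1)).1)
      _ ≤ ∑ _a ∈ A, (ℓ - 1) := ?_
      _ = (ℓ - 1) * m := by rw [sum_const, smul_eq_mul, hm, mul_comm]
    refine sum_le_sum (fun a ha => ?_)
    by_cases haA' : a ∈ A'
    · have : ((E.filter fun p => p.2 ∈ B' ∧ p.1 ∉ A').filter fun p => p.1 = a) = ∅ := by
        refine eq_empty_of_forall_notMem (fun p hp => ?_)
        obtain ⟨hp1, hp2⟩ := mem_filter.mp hp
        exact (mem_filter.mp hp1).2.2 (hp2 ▸ haA')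
      rw [this]; simp
    · have hdeg : (B.filter fun b => (a, b) ∈ E).card ≤ ℓ - 1 := by
        have : ¬ ℓ ≤ (B.filter fun b => (a, b) ∈ E).card := by
          intro h
          exact haA' (mem_filter.mpr ⟨ha, h⟩)
        omega
      refine le_trans ?_ hdeg
      refine card_le_card_of_injOn Prod.snd (fun p hp => ?_) (fun p hp q hq hpq => ?_)
      · obtain ⟨hp1, hp2⟩ := mem_filter.mp hp
        have hpE := (mem_filter.mp hp1).1
        refine mem_filter.mpr ⟨(mem_product.mp (hE hpE)).2, ?_⟩
        have : p = (a, p.2) := by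
          rw [← hp2]
        rw [← this]; exact hpE
      · have hp2 := (mem_filter.mp hp).2
        have hq2 := (mem_filter.mp hq).2
        exact Prod.ext (hp2.trans hq2.symm) hpq
  have hsplit1 : E.card = (E.filter fun p => p.2 ∈ B').card +
      (E.filter fun p => p.2 ∉ B').card :=
    (card_filter_add_card_filter_not (s := E) (fun p : α × β => p.2 ∈ B')).symm
  have hsplit2 : (E.filter fun p => p.2 ∈ B').card =
      (E.filter fun p => p.1 ∈ A' ∧ p.2 ∈ B').card +
      (E.filter fun p => p.2 ∈ B' ∧ p.1 ∉ A').card := by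
    have e1 : ((E.filter fun p => p.2 ∈ B').filter fun p => p.1 ∈ A') =
        E.filter fun p => p.1 ∈ A' ∧ p.2 ∈ B' := by
      ext p; simp only [mem_filter]; tauto
    have e2 : ((E.filter fun p => p.2 ∈ B').filter fun p => ¬ p.1 ∈ A') =
        E.filter fun p => p.2 ∈ B' ∧ p.1 ∉ A' := by
      ext p; simp only [mem_filter]; tauto
    rw [← card_filter_add_card_filter_not (s := E.filter fun p => p.2 ∈ B')
      (p := fun p => p.1 ∈ A'), e1, e2]
  omega
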